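/- arXiv:2103.11075 — 4 statements merged into one kernel-verified Lean document; each statement's English description precedes it below -/
import Mathlib

section
/- Let N ≥ 3 and 0 < V < C. Suppose each agent i ∈ {1,…,N} uses a single unconditional mixed strategy s(i) ∈ [0,1] (a probability of playing Hawk) against every opponent, and suppose that for every pair of distinct agents i, j the profile (s(i), s(j)) is a Nash equilibrium of the Hawk-Dove game. Then s(i) = V/C for every agent i. (With fully restricted memory, the anarchical structure where everyone plays the mixed equilibrium strategy is the unique equilibrium.) -/
/-- Expected payoff in the Hawk-Dove game of a mixed strategy `p` (probability of
playing Hawk) against a mixed strategy `q`. -/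
noncomputable def hdU (V C p q : ℝ) : ℝ :=
  p * q * ((V - C) / 2) + p * (1 - q) * V + (1 - p) * (1 - q) * (V / 2)

/-- A mixed strategy profile `(p, q)` is a Nash equilibrium of the Hawk-Dove game. -/
def hdNash (V C p q : ℝ) : Prop :=
  (∀ p' ∈ Set.Icc (0 : ℝ) 1, hdU V C p' q ≤ hdU V C p q) ∧
  (∀ q' ∈ Set.Icc (0 : ℝ) 1, hdU V C q' p ≤ hdU V C q p)

lemma hdU_linear (V C p q : ℝ) :
    hdU V C p q = p * ((V - q * C) / 2) + (1 - q) * (V / 2) := by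
  unfold hdU; ring

lemma br_lt (V C p q : ℝ) (hC : 0 < C) (hp : p ∈ Set.Icc (0:ℝ) 1)
    (h : ∀ p' ∈ Set.Icc (0 : ℝ) 1, hdU V C p' q ≤ hdU V C p q)
    (hq : q < V / C) : p = 1 := by
  have h1 := h 1 (by constructor <;> norm_num)
  rw [hdU_linear, hdU_linear] at h1
  have hpos : 0 < (V - q * C) / 2 := by
    have : q * C < V := (lt_div_iff₀ hC).mp hq
    linarith
  nlinarith [hp.2]

lemma br_gt (V C p q : ℝ) (hC : 0 < C) (hp : p ∈ Set.Icc (0:ℝ) 1)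
    (h : ∀ p' ∈ Set.Icc (0 : ℝ) 1, hdU V C p' q ≤ hdU V C p q)
    (hq : V / C < q) : p = 0 := by
  have h0 := h 0 (by constructor <;> norm_num)
  rw [hdU_linear, hdU_linear] at h0
  have hneg : (V - q * C) / 2 < 0 := by
    have : V < q * C := (div_lt_iff₀ hC).mp hq
    linarith
  nlinarith [hp.1]

theorem hawkDove_anarchical_unique (N : ℕ) (hN : 3 ≤ N) (V C : ℝ)
    (hV : 0 < V) (hVC : V < C) (s : Fin N → ℝ)
    (hs : ∀ i, s i ∈ Set.Icc (0 : ℝ) 1)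
    (hnash : ∀ i j : Fin N, i ≠ j → hdNash V C (s i) (s j)) :
    ∀ i, s i = V / C := by
  have hC : 0 < C := lt_trans hV hVC
  have hVC1 : V / C < 1 := (div_lt_one hC).mpr hVC
  have hVC0 : 0 < V / C := div_pos hV hC
  intro i
  by_contra hne
  -- find two distinct agents j k ≠ i
  obtain ⟨j, hj, k, hk, hjk⟩ : ∃ j ∈ Finset.univ.erase i, ∃ k ∈ Finset.univ.erase i, j ≠ k := by
    apply Finset.one_lt_card.mp
    have : (Finset.univ.erase i).card = N - 1 := by
      rw [Finset.card_erase_of_mem (Finset.mem_univ i), Finset.card_univ, Fintype.card_fin]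
    omega
  have hji : j ≠ i := Finset.ne_of_mem_erase hj
  have hki : k ≠ i := Finset.ne_of_mem_erase hk
  rcases lt_or_gt_of_ne hne with hlt | hgt
  · -- s i < V/C, so s j = s k = 1
    have hj1 : s j = 1 := br_lt V C (s j) (s i) hC (hs j) ((hnash j i hji).1) hlt
    have hk1 : s k = 1 := br_lt V C (s k) (s i) hC (hs k) ((hnash k i hki).1) hlt
    have : s j = 0 := br_gt V C (s j) (s k) hC (hs j) ((hnash j k hjk).1) (by rw [hk1]; exact hVC1)
    rw [hj1] at this; norm_num at this
  · -- s i > V/C, so s j = s k = 0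
    have hj0 : s j = 0 := br_gt V C (s j) (s i) hC (hs j) ((hnash j i hji).1) hgt
    have hk0 : s k = 0 := br_gt V C (s k) (s i) hC (hs k) ((hnash k i hki).1) hgt
    have : s j = 1 := br_lt V C (s j) (s k) hC (hs j) ((hnash j k hjk).1) (by rw [hk0]; exact hVC0)
    rw [hj0] at this; norm_num at this
end

section
/- (Proposition 1, existence part.) For every natural number N ≥ 1 there exists a memory assignment f mapping each agent i ∈ {1,…,N} to a set f(i) of other agents, such that |f(i)| ≤ ⌈N/2⌉ − 1 for every i, and for every i the set of opponents not in f(i) is one-sided: either every j ∉ f(i) with j ≠ i satisfies j > i, or every such j satisfies j < i. (Hence the linear hierarchy, where each agent plays Hawk against all lower-ranked and Dove against all higher-ranked opponents, can be implemented with memory size ⌈N/2 − 1⌉: each agent plays one action conditioned on each memorized opponent and a single uniform action against all non-memorized opponents.) -/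
theorem linear_hierarchy_implementable (N : ℕ) (hN : 1 ≤ N) :
    ∃ f : ℕ → Finset ℕ,
      ∀ i ∈ Finset.Icc 1 N,
        f i ⊆ (Finset.Icc 1 N).erase i ∧
        (f i).card ≤ (N + 1) / 2 - 1 ∧
        ((∀ j ∈ Finset.Icc 1 N, j ≠ i → j ∉ f i → i < j) ∨
         (∀ j ∈ Finset.Icc 1 N, j ≠ i → j ∉ f i → j < i)) := by
  refine ⟨fun i => if i ≤ (N + 1) / 2 then Finset.Icc 1 (i - 1)
    else Finset.Icc (i + 1) N, ?_⟩
  intro i hi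
  simp only [Finset.mem_Icc] at hi
  obtain ⟨hi1, hiN⟩ := hi
  by_cases h : i ≤ (N + 1) / 2
  · simp only [if_pos h]
    refine ⟨?_, ?_, Or.inl ?_⟩
    · intro j hj
      simp only [Finset.mem_Icc] at hj
      simp only [Finset.mem_erase, Finset.mem_Icc]
      omega
    · rw [Nat.card_Icc]; omega
    · intro j hj hne hnem
      simp only [Finset.mem_Icc] at hj
      simp only [Finset.mem_Icc] at hnem
      omega
  · simp only [if_neg h]
    refine ⟨?_, ?_, Or.inr ?_⟩
    · intro j hj
      simp only [Finset.mem_Icc] at hj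
      simp only [Finset.mem_erase, Finset.mem_Icc]
      omega
    · rw [Nat.card_Icc]; omega
    · intro j hj hne hnem
      simp only [Finset.mem_Icc] at hj
      simp only [Finset.mem_Icc] at hnem
      omega
end

section
/- For all natural numbers m ≤ N, the total memory required for the three-layer dominance hierarchy equals m(N−m) + ⌈m(m−2)/4⌉; that is, m(N−m) + Σ_{i=1}^{m} min(i−1, m−i) = m(N−m) + ⌈m(m−2)/4⌉, where for m ≤ 1 the term ⌈m(m−2)/4⌉ is interpreted as 0. -/
open Finset

lemma tri_range_step (m : ℕ) :
    ∑ j ∈ Finset.range (m + 2), min j (m + 1 - j) =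
      (∑ j ∈ Finset.range m, min j (m - 1 - j)) + m := by
  rw [Finset.sum_range_succ]
  have h1 : min (m + 1) (m + 1 - (m + 1)) = 0 := by simp
  rw [h1, add_zero, Finset.sum_range_succ']
  have h2 : ∀ j ∈ Finset.range m, min (j + 1) (m + 1 - (j + 1)) = min j (m - 1 - j) + 1 := by
    intro j hj
    simp only [Finset.mem_range] at hj
    omega
  rw [Finset.sum_congr rfl h2, Finset.sum_add_distrib, Finset.sum_const, smul_eq_mul,
    mul_one]
  simp

lemma tri_range_closed : ∀ m : ℕ,
    ∑ j ∈ Finset.range m, min j (m - 1 - j) = (m * (m - 2) + 3) / 4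
  | 0 => by simp
  | 1 => by simp
  | (m + 2) => by
    have e : m + 2 - 1 = m + 1 := rfl
    rw [e, tri_range_step m, tri_range_closed m]
    by_cases hm : m = 1
    · subst hm; norm_num
    · have key : (m + 2) * m + 3 = m * (m - 2) + 3 + m * 4 := by
        rcases m with _ | _ | m
        · norm_num
        · omega
        · have : m + 1 + 1 - 2 = m := by omega
          rw [this]; ring
      rw [show m + 2 - 2 = m from rfl, key, Nat.add_mul_div_right _ _ (by norm_num : 0 < 4)]

lemma tri_icc_eq_range (m : ℕ) :
    ∑ i ∈ Finset.Icc 1 m, min (i - 1) (m - i) =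
      ∑ j ∈ Finset.range m, min j (m - 1 - j) := by
  rw [Finset.range_eq_Ico, ← Finset.Ico_add_one_right_eq_Icc]
  rw [Finset.sum_Ico_eq_sum_range]
  rw [Finset.sum_Ico_eq_sum_range]
  apply Finset.sum_congr (by simp)
  intro j hj
  simp only [Finset.mem_range] at hj
  omega

theorem three_layer_total_memory (m N : ℕ) (h : m ≤ N) :
    m * (N - m) + ∑ i ∈ Finset.Icc 1 m, min (i - 1) (m - i) =
      m * (N - m) + (m * (m - 2) + 3) / 4 := by
  rw [tri_icc_eq_range, tri_range_closed]
end

section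
/- For every N ≥ 5, there is no memory assignment f with |f(i)| ≤ 1 for all agents i ∈ {1,…,N} such that for every agent the set of non-memorized opponents is one-sided with respect to the linear rank; that is, the linear hierarchy cannot be supported as an equilibrium when the common memory size is 1 and the population has at least five agents. -/
theorem linear_hierarchy_impossible_with_singular_memory (N : ℕ) (hN : 5 ≤ N) :
    ¬ ∃ f : ℕ → Finset ℕ,
        ∀ i ∈ Finset.Icc 1 N,
          f i ⊆ (Finset.Icc 1 N).erase i ∧
          (f i).card ≤ 1 ∧
          ((∀ j ∈ Finset.Icc 1 N, j ≠ i → j ∉ f i → i < j) ∨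
           (∀ j ∈ Finset.Icc 1 N, j ≠ i → j ∉ f i → j < i)) := by
  rintro ⟨f, hf⟩
  have h3 : (3 : ℕ) ∈ Finset.Icc 1 N := Finset.mem_Icc.mpr ⟨by norm_num, by omega⟩
  obtain ⟨-, hcard, hside⟩ := hf 3 h3
  rcases hside with h | h
  · have h1 : (1 : ℕ) ∈ f 3 := by
      by_contra hmem
      have := h 1 (Finset.mem_Icc.mpr ⟨le_refl 1, by omega⟩) (by norm_num) hmem
      omega
    have h2 : (2 : ℕ) ∈ f 3 := by
      by_contra hmem
      have := h 2 (Finset.mem_Icc.mpr ⟨by norm_num, by omega⟩) (by norm_num) hmem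
      omega
    have hsub : ({1, 2} : Finset ℕ) ⊆ f 3 := by
      intro x hx
      simp only [Finset.mem_insert, Finset.mem_singleton] at hx
      rcases hx with rfl | rfl <;> assumption
    have := Finset.card_le_card hsub
    simp at this
    omega
  · have h4 : (4 : ℕ) ∈ f 3 := by
      by_contra hmem
      have := h 4 (Finset.mem_Icc.mpr ⟨by norm_num, by omega⟩) (by norm_num) hmem
      omega
    have h5 : (5 : ℕ) ∈ f 3 := by
      by_contra hmem
      have := h 5 (Finset.mem_Icc.mpr ⟨by norm_num, by omega⟩) (by norm_num) hmem
      omega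
    have hsub : ({4, 5} : Finset ℕ) ⊆ f 3 := by
      intro x hx
      simp only [Finset.mem_insert, Finset.mem_singleton] at hx
      rcases hx with rfl | rfl <;> assumption
    have := Finset.card_le_card hsub
    simp at this
    omega
end
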